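/- If a finite simple graph Γ is realized as the 1-skeleton of a convex polyhedron inscribed in the cylinder, then Γ admits a Hamiltonian cycle (geometrically, the equator of the corresponding ideal polyhedron in half-pipe space is such a cycle). -/

import Mathlib

open Set

noncomputable section

/-- Euclidean 3-space. -/
abbrev E3 : Type := EuclideanSpace ℝ (Fin 3)

/-- The unit sphere `x₀² + x₁² + x₂² = 1`. -/
def sphereQ : Set E3 := {p | p 0 ^ 2 + p 1 ^ 2 + p 2 ^ 2 = 1}

/-- The open inside of the sphere. -/
def ballB : Set E3 := {p | p 0 ^ 2 + p 1 ^ 2 + p 2 ^ 2 < 1}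

/-- The hyperboloid `x₀² + x₁² − x₂² = 1`. -/
def hypQ : Set E3 := {p | p 0 ^ 2 + p 1 ^ 2 - p 2 ^ 2 = 1}

/-- The open inside of the (solid) hyperboloid. -/
def hypR : Set E3 := {p | p 0 ^ 2 + p 1 ^ 2 - p 2 ^ 2 < 1}

/-- The cylinder `x₀² + x₁² = 1`. -/
def cylQ : Set E3 := {p | p 0 ^ 2 + p 1 ^ 2 = 1}

/-- The open inside of the (solid) cylinder. -/
def cylR : Set E3 := {p | p 0 ^ 2 + p 1 ^ 2 < 1}

/-- The 1-skeleton of the convex polyhedron `P = convexHull ℝ V`: vertices are the points of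
`V`, and distinct `u, v` are adjacent iff the segment `[u,v]` is a face of `P`. -/
def oneSkeleton (V : Set E3) : SimpleGraph V where
  Adj u v := u ≠ v ∧ IsExtreme ℝ (convexHull ℝ V) (segment ℝ (u : E3) (v : E3))
  symm := by
    constructor
    rintro u v ⟨huv, h⟩
    refine ⟨huv.symm, ?_⟩
    rwa [segment_symm]
  loopless := by constructor; rintro u ⟨h, -⟩; exact h rfl

/-- `V` is the vertex set of a convex polyhedron inscribed in the quadric `Q` with open
inside `R`. -/
def IsInscribedVertexSet (Q R V : Set E3) : Prop :=
  V.Finite ∧ V ⊆ Q ∧ affineSpan ℝ V = ⊤ ∧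
    (∀ v ∈ V, v ∈ Set.extremePoints ℝ (convexHull ℝ V)) ∧
    convexHull ℝ V \ V ⊆ R

/-- `Γ` is realized as the 1-skeleton of a convex polyhedron inscribed in the quadric `Q`
with open inside `R`. -/
def RealizesInscribed (Q R : Set E3) {α : Type*} (Γ : SimpleGraph α) : Prop :=
  ∃ V : Set E3, IsInscribedVertexSet Q R V ∧ Nonempty (Γ ≃g oneSkeleton V)

/-- `Γ` admits a Hamiltonian cycle. -/
def HasHamiltonianCycle {α : Type*} [DecidableEq α] (Γ : SimpleGraph α) : Prop :=
  ∃ (v : α) (p : Γ.Walk v v), p.IsHamiltonianCycle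

section AuxHam
open SimpleGraph


private def pathAux {β : Type*} {G : SimpleGraph β} (f : ℕ → β)
    (hadj : ∀ i : ℕ, G.Adj (f i) (f (i + 1))) : (k : ℕ) → G.Walk (f 1) (f (k + 1))
  | 0 => Walk.nil
  | k + 1 => (pathAux f hadj k).concat (hadj (k + 1))

lemma pathAux_support {β : Type*} {G : SimpleGraph β} (f : ℕ → β)
    (hadj : ∀ i : ℕ, G.Adj (f i) (f (i + 1))) (k : ℕ) :
    (pathAux (G := G) f hadj k).support = (List.range' 1 (k + 1)).map f := by
  induction k with
  | zero => simp [pathAux]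
  | succ k ih =>
      rw [pathAux, Walk.support_concat, ih]
      have h1 : 1 + (k + 1) = k + 1 + 1 := by omega
      have h2 : 1 + k = k + 1 := by omega
      simp [List.range'_concat, h1, h2]

lemma pathAux_edges {β : Type*} {G : SimpleGraph β} (f : ℕ → β)
    (hadj : ∀ i : ℕ, G.Adj (f i) (f (i + 1))) (k : ℕ) :
    (pathAux (G := G) f hadj k).edges
      = (List.range' 1 k).map (fun i => s(f i, f (i + 1))) := by
  induction k with
  | zero => simp [pathAux]
  | succ k ih =>
      rw [pathAux, Walk.edges_concat, ih]
      have h1 : 1 + k = k + 1 := by omega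
      have h2 : 1 + (k + 1) = k + 1 + 1 := by omega
      simp [List.range'_concat, h1, h2]

open Fin.NatCast in
lemma hasHamCycle_of_cyclic {β : Type*} [DecidableEq β] {G : SimpleGraph β} {n : ℕ}
    [NeZero n] (hn : 3 ≤ n) (w : Fin n ≃ β) (hadj : ∀ i : Fin n, G.Adj (w i) (w (i + 1))) :
    ∃ (v : β) (p : G.Walk v v), p.IsHamiltonianCycle := by
  have hn0 : 0 < n := by omega
  set f : ℕ → β := fun i => w (i : Fin n) with hf
  have hadj' : ∀ i : ℕ, G.Adj (f i) (f (i + 1)) := by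
    intro i
    have := hadj (i : Fin n)
    simpa [f] using this
  have hfn : f ((n - 1) + 1) = f 0 := by
    have : ((n - 1 + 1 : ℕ) : Fin n) = ((0 : ℕ) : Fin n) := by
      rw [Nat.sub_add_cancel (by omega)]
      simp [Fin.natCast_self]
    simp only [f, this]
  -- cast injectivity on [1, n]
  have hcast : ∀ i ∈ List.range' 1 n, ∀ j ∈ List.range' 1 n,
      ((i : Fin n) = (j : Fin n)) → i = j := by
    intro i hi j hj hij
    rw [List.mem_range'_1] at hi hj
    have h1 : (i : Fin n).val = i % n := Fin.val_natCast i n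
    have h2 : (j : Fin n).val = j % n := Fin.val_natCast j n
    have : i % n = j % n := by rw [← h1, ← h2, hij]
    rcases Nat.lt_or_ge i n with hi' | hi' <;> rcases Nat.lt_or_ge j n with hj' | hj'
    · rwa [Nat.mod_eq_of_lt hi', Nat.mod_eq_of_lt hj'] at this
    · have hj'' : j = n := by omega
      rw [Nat.mod_eq_of_lt hi', hj'', Nat.mod_self] at this; omega
    · have hi'' : i = n := by omega
      rw [Nat.mod_eq_of_lt hj', hi'', Nat.mod_self] at this; omega
    · omega
  have hmod : ∀ a b : ℕ, f a = f b → a % n = b % n := by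
    intro a b hab
    have h1 : ((a : ℕ) : Fin n) = ((b : ℕ) : Fin n) := w.injective (by simpa [hf] using hab)
    have := congrArg Fin.val h1
    rwa [Fin.val_natCast, Fin.val_natCast] at this
  have hnodup : ((List.range' 1 n).map f).Nodup := by
    refine List.Nodup.map_on ?_ (List.nodup_range' (s := 1) (n := n))
    intro i hi j hj hfij
    exact hcast i hi j hj (w.injective hfij)
  set q : G.Walk (f 1) (f 0) := (pathAux (G := G) f hadj' (n - 1)).copy rfl hfn with hq
  have hqsupp : q.support = (List.range' 1 n).map f := by
    rw [hq, Walk.support_copy, pathAux_support, Nat.sub_add_cancel (by omega)]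
  have hqpath : q.IsPath := Walk.IsPath.mk' (by rw [hqsupp]; exact hnodup)
  have hqedges : q.edges = (List.range' 1 (n - 1)).map (fun i => s(f i, f (i + 1))) := by
    rw [hq, Walk.edges_copy, pathAux_edges]
  have hedge : s(f 0, f 1) ∉ q.edges := by
    rw [hqedges]
    intro hmem
    obtain ⟨i, hi, heq⟩ := List.mem_map.mp hmem
    rw [List.mem_range'_1] at hi
    rw [Sym2.eq_iff] at heq
    rcases heq with ⟨h1, h2⟩ | ⟨h1, h2⟩
    · have := hmod i 0 h1
      rw [Nat.mod_eq_of_lt (by omega), Nat.zero_mod] at this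
      omega
    · have e1 := hmod i 1 h1
      rw [Nat.mod_eq_of_lt (by omega), Nat.mod_eq_of_lt (by omega)] at e1
      have e2 := hmod (i + 1) 0 h2
      rw [Nat.mod_eq_of_lt (by omega), Nat.zero_mod] at e2
      omega
  set c : G.Walk (f 0) (f 0) := Walk.cons (hadj' 0) q with hc
  refine ⟨f 0, c, ?_⟩
  rw [Walk.isHamiltonianCycle_iff_isCycle_and_support_count_tail_eq_one]
  constructor
  · rw [hc]
    exact (Walk.cons_isCycle_iff q (hadj' 0)).mpr ⟨hqpath, hedge⟩
  · intro b
    have hct : c.support.tail = (List.range' 1 n).map f := by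
      rw [hc, Walk.support_cons, List.tail_cons, hqsupp]
    rw [hct]
    have hmem : b ∈ (List.range' 1 n).map f := by
      have hb : w (w.symm b) = b := w.apply_symm_apply b
      rcases Nat.eq_zero_or_pos (w.symm b).val with h0 | h0
      · refine List.mem_map.mpr ⟨n, List.mem_range'_1.mpr ⟨by omega, by omega⟩, ?_⟩
        have hr : w.symm b = 0 := Fin.ext (by simpa using h0)
        simp only [f, Fin.natCast_self]
        rw [← hr, hb]
      · refine List.mem_map.mpr ⟨(w.symm b).val, List.mem_range'_1.mpr ⟨by omega, ?_⟩, ?_⟩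
        · have := (w.symm b).isLt; omega
        · simp only [f, Fin.cast_val_eq_self]
          exact hb
    exact List.count_eq_one_of_mem hnodup hmem

end AuxHam





-- cos comparison
lemma cos_lt_cos_aux {d x : ℝ} (hd0 : 0 < d) (hdpi : d < Real.pi)
    (h1 : d < x) (h2 : x < 2 * Real.pi - d) : Real.cos x < Real.cos d := by
  rcases le_or_gt x Real.pi with hx | hx
  · exact Real.cos_lt_cos_of_nonneg_of_le_pi hd0.le hx h1
  · rw [← Real.cos_two_pi_sub]
    exact Real.cos_lt_cos_of_nonneg_of_le_pi hd0.le (by linarith) (by linarith)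

-- exposed segment
lemma isExtreme_segment {V : Set E3} (hfin : V.Finite) {u v : E3} (hu : u ∈ V) (hv : v ∈ V)
    (l : E3 →L[ℝ] ℝ) (c : ℝ) (hlu : l u = c) (hlv : l v = c)
    (hlt : ∀ x ∈ V, x ≠ u → x ≠ v → l x < c) :
    IsExtreme ℝ (convexHull ℝ V) (segment ℝ u v) := by
  classical
  have hVle : ∀ y ∈ V, l y ≤ c := by
    intro y hy
    by_cases h1 : y = u
    · exact (h1 ▸ hlu).le
    by_cases h2 : y = v
    · exact (h2 ▸ hlv).le
    exact (hlt y hy h1 h2).le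
  have hc_le : ∀ y ∈ convexHull ℝ V, l y ≤ c := by
    intro y hy
    have : convexHull ℝ V ⊆ {w | l w ≤ c} :=
      convexHull_min hVle (convex_halfSpace_le ⟨l.map_add, l.map_smul⟩ c)
    exact this hy
  set t : Finset E3 := hfin.toFinset with ht
  have hts : (t : Set E3) = V := hfin.coe_toFinset
  have key : segment ℝ u v = {x ∈ convexHull ℝ V | ∀ y ∈ convexHull ℝ V, l y ≤ l x} := by
    apply Set.Subset.antisymm
    · intro x hx
      obtain ⟨p, q, hp, hq, hpq, rfl⟩ := hx
      have hxc : l (p • u + q • v) = c := by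
        simp only [map_add, map_smul, smul_eq_mul, hlu, hlv, ← add_mul, hpq, one_mul]
      refine ⟨segment_subset_convexHull hu hv ⟨p, q, hp, hq, hpq, rfl⟩, ?_⟩
      intro y hy; rw [hxc]; exact hc_le y hy
    · rintro x ⟨hx, hmax⟩
      have hxc : l x = c := le_antisymm (hc_le x hx)
        (by simpa [hlu] using hmax u (subset_convexHull ℝ V hu))
      rw [← convexHull_pair]
      have hx' : x ∈ convexHull ℝ (t : Set E3) := by rw [hts]; exact hx
      obtain ⟨ww, hw0, hw1, hwx⟩ := Finset.mem_convexHull'.mp hx'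
      have hterm : ∀ y ∈ t, ww y * (c - l y) = 0 := by
        have hsum : ∑ y ∈ t, ww y * (c - l y) = 0 := by
          have hlx : ∑ y ∈ t, ww y * l y = c := by
            have := congrArg l hwx
            rw [map_sum] at this
            simp only [map_smul, smul_eq_mul] at this
            rw [this, hxc]
          calc ∑ y ∈ t, ww y * (c - l y)
              = (∑ y ∈ t, ww y) * c - ∑ y ∈ t, ww y * l y := by
                rw [Finset.sum_mul, ← Finset.sum_sub_distrib]; congr 1; ext y; ring
            _ = 0 := by rw [hw1, hlx]; ring
        intro y hy
        refine (Finset.sum_eq_zero_iff_of_nonneg ?_).mp hsum y hy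
        intro z hz
        have hzV : z ∈ V := by rw [← hts]; exact hz
        exact mul_nonneg (hw0 z hz) (by linarith [hVle z hzV])
      have hsupp : ∀ y ∈ t, ww y ≠ 0 → y = u ∨ y = v := by
        intro y hy hwy
        by_contra hcon
        push_neg at hcon
        have hylt : l y < c := hlt y (by rw [← hts]; exact hy) hcon.1 hcon.2
        have := hterm y hy
        rcases mul_eq_zero.mp this with h | h
        · exact hwy h
        · linarith
      have hxmem : x ∈ convexHull ℝ ({u, v} : Set E3) := by
        have hfilter : ({y ∈ t | ww y ≠ 0} : Finset E3).centerMass ww id = t.centerMass ww id :=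
          Finset.centerMass_filter_ne_zero (w := ww) id
        have hcm : t.centerMass ww id = x := by
          rw [Finset.centerMass_eq_of_sum_1 _ _ hw1]
          simpa using hwx
        rw [← hcm, ← hfilter]
        refine Finset.centerMass_mem_convexHull _ ?_ ?_ ?_
        · intro i hi; exact hw0 i (Finset.mem_filter.mp hi).1
        · rw [Finset.sum_filter_ne_zero, hw1]; exact one_pos
        · intro i hi
          obtain ⟨hit, hiw⟩ := Finset.mem_filter.mp hi
          rcases hsupp i hit hiw with h | h <;> simp [h]
      exact hxmem
  have hexp : IsExposed ℝ (convexHull ℝ V) (segment ℝ u v) := fun _ => ⟨l, key⟩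
  exact hexp.isExtreme

lemma chord_lemma {V : Set E3} (hfin : V.Finite) {u v : E3} (hu : u ∈ V) (hv : v ∈ V)
    {α β : ℝ} (hαβ : α < β) (hβα : β - α < 2 * Real.pi)
    (hu0 : u 0 = Real.cos α) (hu1 : u 1 = Real.sin α)
    (hv0 : v 0 = Real.cos β) (hv1 : v 1 = Real.sin β)
    (hoth : ∀ x ∈ V, x ≠ u → x ≠ v → ∃ γ : ℝ, x 0 = Real.cos γ ∧ x 1 = Real.sin γ ∧
      ((β - 2 * Real.pi < γ ∧ γ < α) ∨ (β < γ ∧ γ < α + 2 * Real.pi))) :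
    u ≠ v ∧ IsExtreme ℝ (convexHull ℝ V) (segment ℝ u v) := by
  have hpi := Real.pi_pos
  constructor
  · intro huv
    have h0 : Real.cos β = Real.cos α := by rw [← hu0, ← hv0, huv]
    have h1 : Real.sin β = Real.sin α := by rw [← hu1, ← hv1, huv]
    have : Real.cos (β - α) = 1 := by
      rw [Real.cos_sub, h0, h1]
      rw [← Real.sin_sq_add_cos_sq α]; ring
    obtain ⟨k, hk⟩ := (Real.cos_eq_one_iff _).mp this
    have hk0 : (0 : ℝ) < k * (2 * Real.pi) := by rw [hk]; linarith
    have hkpos : (0 : ℤ) < k := by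
      by_contra hkn
      push_neg at hkn
      have : (k : ℝ) ≤ 0 := by exact_mod_cast hkn
      nlinarith
    have : (1 : ℝ) ≤ (k : ℝ) := by exact_mod_cast hkpos
    nlinarith
  · set m := (α + β) / 2 with hm
    set δ := (β - α) / 2 with hδ
    have hδ0 : 0 < δ := by rw [hδ]; linarith
    have hδπ : δ < Real.pi := by rw [hδ]; linarith
    set wv : E3 := (WithLp.equiv 2 (Fin 3 → ℝ)).symm ![Real.cos m, Real.sin m, 0] with hwv
    set l : E3 →L[ℝ] ℝ := innerSL ℝ wv with hl
    have heval : ∀ p : E3, l p = Real.cos m * p 0 + Real.sin m * p 1 := by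
      intro p
      simp only [hl, innerSL_apply_apply]
      rw [PiLp.inner_apply]
      simp [Fin.sum_univ_three, hwv, WithLp.equiv_symm_apply]; ring
    have hval : ∀ γ : ℝ, Real.cos m * Real.cos γ + Real.sin m * Real.sin γ
        = Real.cos (γ - m) := by
      intro γ; rw [Real.cos_sub]; ring
    have hlu : l u = Real.cos δ := by
      rw [heval, hu0, hu1, hval]
      have : α - m = -δ := by rw [hm, hδ]; ring
      rw [this, Real.cos_neg]
    have hlv : l v = Real.cos δ := by
      rw [heval, hv0, hv1, hval]
      have : β - m = δ := by rw [hm, hδ]; ring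
      rw [this]
    refine isExtreme_segment hfin hu hv l (Real.cos δ) hlu hlv ?_
    intro x hx hxu hxv
    obtain ⟨γ, hx0, hx1, hcase⟩ := hoth x hx hxu hxv
    have hlx : l x = Real.cos (γ - m) := by rw [heval, hx0, hx1, hval]
    rw [hlx]
    rcases hcase with ⟨hg1, hg2⟩ | ⟨hg1, hg2⟩
    · rw [← Real.cos_neg, neg_sub]
      apply cos_lt_cos_aux hδ0 hδπ
      · rw [hm, hδ]; linarith
      · rw [hm, hδ]; linarith
    · apply cos_lt_cos_aux hδ0 hδπ
      · rw [hm, hδ]; linarith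
      · rw [hm, hδ]; linarith

lemma proj_injective {V : Set E3} (hsub : V ⊆ cylQ)
    (hext : ∀ v ∈ V, v ∈ Set.extremePoints ℝ (convexHull ℝ V))
    (hins : convexHull ℝ V \ V ⊆ cylR)
    {u v : E3} (hu : u ∈ V) (hv : v ∈ V) (h0 : u 0 = v 0) (h1 : u 1 = v 1) : u = v := by
  by_contra hne
  set m : E3 := (1/2 : ℝ) • u + (1/2 : ℝ) • v with hm
  have hseg : m ∈ openSegment ℝ u v := ⟨1/2, 1/2, by norm_num, by norm_num, by norm_num, rfl⟩
  have hhull : m ∈ convexHull ℝ V :=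
    segment_subset_convexHull hu hv (openSegment_subset_segment ℝ u v hseg)
  have hm0 : m 0 = u 0 := by
    simp only [hm, PiLp.add_apply, PiLp.smul_apply, smul_eq_mul, ← h0]; ring
  have hm1 : m 1 = u 1 := by
    simp only [hm, PiLp.add_apply, PiLp.smul_apply, smul_eq_mul, ← h1]; ring
  have hucyl : u 0 ^ 2 + u 1 ^ 2 = 1 := hsub hu
  have hcyl : m 0 ^ 2 + m 1 ^ 2 = 1 := by rw [hm0, hm1]; exact hucyl
  have hmV : m ∈ V := by
    by_contra hmv
    have h' : m 0 ^ 2 + m 1 ^ 2 < 1 := hins ⟨hhull, hmv⟩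
    rw [hcyl] at h'
    exact lt_irrefl _ h'
  have hex := hext m hmV
  rw [mem_extremePoints] at hex
  have := hex.2 u (subset_convexHull ℝ V hu) v (subset_convexHull ℝ V hv) hseg
  exact hne (this.1.trans this.2.symm)



/-- If `Γ` is realized as the 1-skeleton of a convex polyhedron inscribed in the
cylinder, then `Γ` admits a Hamiltonian cycle. -/
theorem hamiltonian_of_inscribed_cylinder
    {α : Type*} [Fintype α] [DecidableEq α] (Γ : SimpleGraph α)
    (h : RealizesInscribed cylQ cylR Γ) :
    HasHamiltonianCycle Γ := by
  classical
  obtain ⟨V, ⟨hfin, hsub, hspan, hext, hins⟩, ⟨e⟩⟩ := h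
  haveI instV : Fintype V := hfin.fintype
  have hpi := Real.pi_pos
  -- the angle of each vertex
  set a : V → ℝ := fun v => Complex.arg ⟨v.1 0, v.1 1⟩ with ha
  have hne0 : ∀ v : V, (⟨v.1 0, v.1 1⟩ : ℂ) ≠ 0 := by
    intro v hz
    have hcyl : v.1 0 ^ 2 + v.1 1 ^ 2 = 1 := hsub v.2
    have h0 : v.1 0 = 0 := congrArg Complex.re hz
    have h1 : v.1 1 = 0 := congrArg Complex.im hz
    rw [h0, h1] at hcyl; norm_num at hcyl
  have habs : ∀ v : V, ‖(⟨v.1 0, v.1 1⟩ : ℂ)‖ = 1 := by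
    intro v
    have hcyl : v.1 0 ^ 2 + v.1 1 ^ 2 = 1 := hsub v.2
    have h2 : ‖(⟨v.1 0, v.1 1⟩ : ℂ)‖ ^ 2 = 1 := by
      rw [Complex.sq_norm, Complex.normSq_mk]; nlinarith
    nlinarith [norm_nonneg (⟨v.1 0, v.1 1⟩ : ℂ)]
  have hcos : ∀ v : V, v.1 0 = Real.cos (a v) := by
    intro v
    rw [ha, Complex.cos_arg (hne0 v), habs v, div_one]
  have hsin : ∀ v : V, v.1 1 = Real.sin (a v) := by
    intro v
    rw [ha, Complex.sin_arg, habs v, div_one]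
  have hrange : ∀ v : V, -Real.pi < a v ∧ a v ≤ Real.pi :=
    fun v => ⟨Complex.neg_pi_lt_arg _, Complex.arg_le_pi _⟩
  have hainj : Function.Injective a := by
    intro u v huv
    apply Subtype.ext
    apply proj_injective hsub hext hins u.2 v.2
    · rw [hcos u, hcos v, huv]
    · rw [hsin u, hsin v, huv]
  set n := Fintype.card V with hn
  -- n ≥ 3
  have hVne : V.Nonempty := by
    rw [← affineSpan_nonempty (k := ℝ)]
    exact ⟨0, hspan ▸ AffineSubspace.mem_top ℝ E3 0⟩
  haveI : Nonempty V := hVne.to_subtype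
  have hn3 : 3 ≤ n := by
    have htop : vectorSpan ℝ V = ⊤ := by
      rw [← direction_affineSpan, hspan, AffineSubspace.direction_top]
    have hfr : Module.finrank ℝ (vectorSpan ℝ V) = 3 := by
      rw [htop, finrank_top, finrank_euclideanSpace_fin]
    have hcard : 1 ≤ n := Fintype.card_pos
    have hciV : ∀ (inst : Fintype ↥V), @Fintype.card ↥V inst = n :=
      fun inst => (@Fintype.card_congr _ _ inst instV (Equiv.refl _)).trans hn.symm
    have hle := finrank_vectorSpan_range_le ℝ (Subtype.val : V → E3)
      (n := n - 1) (by rw [hciV]; omega)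
    rw [Subtype.range_coe, hfr] at hle
    omega
  haveI : NeZero n := ⟨by omega⟩
  -- sorted enumeration of V by angle
  set A : Finset ℝ := Finset.univ.image a with hA
  have hAcard : A.card = n := by
    rw [hA, Finset.card_image_of_injective _ hainj, Finset.card_univ]
  set σ : Fin n ≃o A := A.orderIsoOfFin hAcard with hσ
  have hτbij : Function.Bijective
      (fun v : V => (⟨a v, Finset.mem_image_of_mem a (Finset.mem_univ v)⟩ : A)) := by
    constructor
    · intro x y hxy
      exact hainj (congrArg Subtype.val hxy)
    · rintro ⟨x, hx⟩
      obtain ⟨v, -, rfl⟩ := Finset.mem_image.mp hx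
      exact ⟨v, rfl⟩
  set τ : V ≃ A := Equiv.ofBijective _ hτbij with hτ
  set w : Fin n ≃ V := σ.toEquiv.trans τ.symm with hw
  have haw : ∀ i : Fin n, a (w i) = (σ i : ℝ) := by
    intro i
    have : τ (τ.symm (σ i)) = σ i := τ.apply_symm_apply (σ i)
    have h2 := congrArg Subtype.val this
    exact h2
  set θ : Fin n → ℝ := fun i => a (w i) with hθ
  have hmono : ∀ {i j : Fin n}, i < j → θ i < θ j := by
    intro i j hij
    rw [hθ]
    simp only [haw]
    exact Subtype.coe_lt_coe.mpr (σ.strictMono hij)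
  have hθrange : ∀ i : Fin n, -Real.pi < θ i ∧ θ i ≤ Real.pi := fun i => hrange (w i)
  -- adjacency of consecutive vertices
  have hadj : ∀ i : Fin n, (oneSkeleton V).Adj (w i) (w (i + 1)) := by
    intro i
    have hval : ((i + 1 : Fin n) : ℕ) = ((i : ℕ) + 1) % n := by
      rw [Fin.add_def, Fin.val_one', Nat.mod_eq_of_lt (show 1 < n by omega)]
    -- a common helper to produce γ for other vertices
    have hcoords : ∀ j : Fin n, (w j).1 0 = Real.cos (θ j) ∧ (w j).1 1 = Real.sin (θ j) :=
      fun j => ⟨hcos (w j), hsin (w j)⟩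
    rcases lt_or_ge ((i : ℕ) + 1) n with hlt | hge
    · -- non-wrapping case
      have hval' : ((i + 1 : Fin n) : ℕ) = (i : ℕ) + 1 := by
        rw [hval, Nat.mod_eq_of_lt hlt]
      have hii1 : i < i + 1 := by rw [Fin.lt_def, hval']; omega
      have hkey := chord_lemma hfin (w i).2 (w (i + 1)).2
        (hmono hii1)
        (by linarith [(hθrange i).1, (hθrange (i+1)).2])
        (hcoords i).1 (hcoords i).2 (hcoords (i + 1)).1 (hcoords (i + 1)).2
        ?_
      · exact ⟨fun hh => hkey.1 (congrArg Subtype.val hh), hkey.2⟩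
      · intro x hx hxu hxv
        set j : Fin n := w.symm ⟨x, hx⟩ with hj
        have hxj : (w j).1 = x := congrArg Subtype.val (w.apply_symm_apply ⟨x, hx⟩)
        have hji : j ≠ i := fun hh => hxu (by rw [← hxj, hh])
        have hji1 : j ≠ i + 1 := fun hh => hxv (by rw [← hxj, hh])
        refine ⟨θ j, by rw [← hxj]; exact (hcoords j).1, by rw [← hxj]; exact (hcoords j).2, ?_⟩
        have hjv : (j : ℕ) ≠ (i : ℕ) := fun hh => hji (Fin.ext hh)
        have hjv1 : (j : ℕ) ≠ (i : ℕ) + 1 := fun hh => hji1 (Fin.ext (by rw [hval']; exact hh))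
        rcases lt_or_gt_of_ne hjv with hc | hc
        · left
          refine ⟨by linarith [(hθrange j).1, (hθrange (i+1)).2], ?_⟩
          exact hmono (Fin.lt_def.mpr hc)
        · right
          have : (i : ℕ) + 1 < (j : ℕ) := by omega
          refine ⟨hmono (Fin.lt_def.mpr (by rw [hval']; exact this)), ?_⟩
          linarith [(hθrange j).2, (hθrange i).1]
    · -- wrapping case : i is the last index
      have hival : (i : ℕ) = n - 1 := by have := i.isLt; omega
      have hval' : ((i + 1 : Fin n) : ℕ) = 0 := by
        rw [hval]; have : (i : ℕ) + 1 = n := by omega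
        rw [this, Nat.mod_self]
      have hi1i : i + 1 < i := by rw [Fin.lt_def, hval']; omega
      have hkey := chord_lemma hfin (w i).2 (w (i + 1)).2
        (α := θ i) (β := θ (i + 1) + 2 * Real.pi)
        (by linarith [(hθrange i).2, (hθrange (i+1)).1])
        (by have := hmono hi1i; linarith)
        (hcoords i).1 (hcoords i).2
        (by rw [Real.cos_add_two_pi]; exact (hcoords (i + 1)).1)
        (by rw [Real.sin_add_two_pi]; exact (hcoords (i + 1)).2)
        ?_
      · exact ⟨fun hh => hkey.1 (congrArg Subtype.val hh), hkey.2⟩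
      · intro x hx hxu hxv
        set j : Fin n := w.symm ⟨x, hx⟩ with hj
        have hxj : (w j).1 = x := congrArg Subtype.val (w.apply_symm_apply ⟨x, hx⟩)
        have hji : j ≠ i := fun hh => hxu (by rw [← hxj, hh])
        have hji1 : j ≠ i + 1 := fun hh => hxv (by rw [← hxj, hh])
        refine ⟨θ j, by rw [← hxj]; exact (hcoords j).1, by rw [← hxj]; exact (hcoords j).2, ?_⟩
        left
        constructor
        · have : i + 1 < j := by
            rw [Fin.lt_def, hval']
            rcases Nat.eq_zero_or_pos (j : ℕ) with h0 | h0
            · exact absurd (Fin.ext (by rw [hval', h0])) hji1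
            · exact h0
          have := hmono this
          linarith
        · have : j < i := by
            rw [Fin.lt_def, hival]
            have hjn := j.isLt
            have : (j : ℕ) ≠ n - 1 := fun hh => hji (Fin.ext (by rw [hival]; exact hh))
            omega
          exact hmono this
  -- construct the hamiltonian cycle
  obtain ⟨v0, p, hp⟩ := hasHamCycle_of_cyclic hn3 w hadj
  refine ⟨e.symm v0, p.map e.symm.toHom, ?_⟩
  exact hp.map e.symm.bijective

end
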